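/- Let λ, μ : ℕ → ℝ be nonincreasing sequences of nonnegative real numbers with ∑_{n=1}^∞ λ_n = ∑_{n=1}^∞ μ_n = 1 such that λ is weakly majorized by μ (for every N, ∑_{k=1}^N λ_k ≤ ∑_{k=1}^N μ_k). If ∑_{k=1}^∞ (1+λ_k)·log(1+λ_k) = ∑_{k=1}^∞ (1+μ_k)·log(1+μ_k), then λ_k = μ_k for every k. -/

import Mathlib

/-- Abel-type bound: if `c` is antitone and the partial sums of `d` are nonnegative,
then `c N * (∑_{k<N} d k) ≤ ∑_{k<N} c k * d k`. -/
lemma stmt14_abel (c d : ℕ → ℝ) (hc : Antitone c)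
    (hD : ∀ N, 0 ≤ ∑ k ∈ Finset.range N, d k) :
    ∀ N, c N * ∑ k ∈ Finset.range N, d k ≤ ∑ k ∈ Finset.range N, c k * d k := by
  intro N
  induction N with
  | zero => simp
  | succ N ih =>
    rw [Finset.sum_range_succ, Finset.sum_range_succ]
    have h1 : c (N + 1) * (∑ k ∈ Finset.range N, d k + d N)
        ≤ c N * (∑ k ∈ Finset.range N, d k + d N) := by
      apply mul_le_mul_of_nonneg_right (hc (Nat.le_succ N))
      simpa [Finset.sum_range_succ] using hD (N + 1)
    nlinarith [ih]

/-- Strict convexity gap of `F x = (1+x) log(1+x)` at the tangent at `a`. -/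
lemma stmt14_gap_nonneg (a b : ℝ) (ha : 0 ≤ a) (hb : 0 ≤ b) :
    0 ≤ (1 + b) * Real.log (1 + b) - (1 + a) * Real.log (1 + a)
      - (Real.log (1 + a) + 1) * (b - a) := by
  have hu : (0:ℝ) < 1 + a := by linarith
  have hv : (0:ℝ) < 1 + b := by linarith
  have key : Real.log ((1 + a) / (1 + b)) ≤ (1 + a) / (1 + b) - 1 :=
    Real.log_le_sub_one_of_pos (div_pos hu hv)
  rw [Real.log_div (ne_of_gt hu) (ne_of_gt hv)] at key
  have key2 : (1 + b) * (Real.log (1 + a) - Real.log (1 + b))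
      ≤ (1 + b) * ((1 + a) / (1 + b) - 1) := by
    exact mul_le_mul_of_nonneg_left key (le_of_lt hv)
  have : (1 + b) * ((1 + a) / (1 + b) - 1) = a - b := by
    field_simp
    ring
  rw [this] at key2
  nlinarith [key2]

/-- Strict version: the gap vanishes only at `a = b`. -/
lemma stmt14_gap_pos (a b : ℝ) (ha : 0 ≤ a) (hb : 0 ≤ b) (hne : a ≠ b) :
    0 < (1 + b) * Real.log (1 + b) - (1 + a) * Real.log (1 + a)
      - (Real.log (1 + a) + 1) * (b - a) := by
  have hu : (0:ℝ) < 1 + a := by linarith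
  have hv : (0:ℝ) < 1 + b := by linarith
  have hne' : (1 + a) / (1 + b) ≠ 1 := by
    intro h
    apply hne
    field_simp at h
    linarith
  have key : Real.log ((1 + a) / (1 + b)) < (1 + a) / (1 + b) - 1 :=
    Real.log_lt_sub_one_of_pos (div_pos hu hv) hne'
  rw [Real.log_div (ne_of_gt hu) (ne_of_gt hv)] at key
  have key2 : (1 + b) * (Real.log (1 + a) - Real.log (1 + b))
      < (1 + b) * ((1 + a) / (1 + b) - 1) := by
    exact mul_lt_mul_of_pos_left key hv
  have : (1 + b) * ((1 + a) / (1 + b) - 1) = a - b := by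
    field_simp
    ring
  rw [this] at key2
  nlinarith [key2]

/-- If λ, μ are nonincreasing nonnegative sequences summing to 1 with
λ weakly majorized by μ, and the renormalized entropies coincide, then λ = μ. -/
theorem stmt_14 (l m : ℕ → ℝ) (hl_mono : Antitone l) (hm_mono : Antitone m)
    (hl : ∀ n, 0 ≤ l n) (hm : ∀ n, 0 ≤ m n)
    (hl_sum : HasSum l 1) (hm_sum : HasSum m 1)
    (hmaj : ∀ N : ℕ, ∑ k ∈ Finset.range N, l k ≤ ∑ k ∈ Finset.range N, m k)
    (heq : (∑' k, (1 + l k) * Real.log (1 + l k)) =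
      ∑' k, (1 + m k) * Real.log (1 + m k)) :
    ∀ k, l k = m k := by
  set F : ℝ → ℝ := fun x => (1 + x) * Real.log (1 + x) with hF
  -- F is nonnegative and ≤ 2x on [0,1]
  have hFnn : ∀ x : ℝ, 0 ≤ x → 0 ≤ F x := by
    intro x hx
    apply mul_nonneg (by linarith)
    apply Real.log_nonneg; linarith
  have hFle : ∀ x : ℝ, 0 ≤ x → x ≤ 1 → F x ≤ 2 * x := by
    intro x hx hx1
    have h1 : Real.log (1 + x) ≤ x := by
      have := Real.log_le_sub_one_of_pos (show (0:ℝ) < 1 + x by linarith)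
      linarith
    have h2 : (1 + x) * Real.log (1 + x) ≤ (1 + x) * x :=
      mul_le_mul_of_nonneg_left h1 (by linarith)
    simp only [hF]
    nlinarith [Real.log_nonneg (show (1:ℝ) ≤ 1 + x by linarith)]
  have hl1 : ∀ k, l k ≤ 1 := fun k => le_hasSum hl_sum k (fun i _ => hl i)
  have hm1 : ∀ k, m k ≤ 1 := fun k => le_hasSum hm_sum k (fun i _ => hm i)
  -- summability of F ∘ l and F ∘ m
  have hsl : Summable (fun k => F (l k)) := by
    apply Summable.of_nonneg_of_le (fun k => hFnn _ (hl k))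
      (fun k => hFle _ (hl k) (hl1 k))
    exact hl_sum.summable.mul_left 2
  have hsm : Summable (fun k => F (m k)) := by
    apply Summable.of_nonneg_of_le (fun k => hFnn _ (hm k))
      (fun k => hFle _ (hm k) (hm1 k))
    exact hm_sum.summable.mul_left 2
  -- the gap sequence
  set c : ℕ → ℝ := fun k => Real.log (1 + l k) + 1 with hc
  set g : ℕ → ℝ := fun k => F (m k) - F (l k) - c k * (m k - l k) with hg
  have hgnn : ∀ k, 0 ≤ g k := fun k => stmt14_gap_nonneg (l k) (m k) (hl k) (hm k)
  have hc_anti : Antitone c := by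
    intro i j hij
    have : l j ≤ l i := hl_mono hij
    have := Real.log_le_log (show (0:ℝ) < 1 + l j by have := hl j; linarith)
      (by linarith : 1 + l j ≤ 1 + l i)
    simp only [hc]
    linarith
  -- partial sums of d k = m k - l k are nonneg
  have hD : ∀ N, 0 ≤ ∑ k ∈ Finset.range N, (m k - l k) := by
    intro N
    rw [Finset.sum_sub_distrib]
    have := hmaj N
    linarith
  -- Abel: ∑_{k<N} c k * (m k - l k) ≥ 0
  have hS : ∀ N, 0 ≤ ∑ k ∈ Finset.range N, c k * (m k - l k) := by
    intro N
    have h1 := stmt14_abel c (fun k => m k - l k) hc_anti hD N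
    have h2 : 0 ≤ c N * ∑ k ∈ Finset.range N, (m k - l k) := by
      apply mul_nonneg _ (hD N)
      have : 0 ≤ Real.log (1 + l N) := Real.log_nonneg (by have := hl N; linarith)
      simp only [hc]; linarith
    exact le_trans h2 h1
  -- partial sums of g are ≤ partial sums of (F∘m - F∘l)
  have hgP : ∀ N, ∑ k ∈ Finset.range N, g k
      ≤ ∑ k ∈ Finset.range N, (F (m k) - F (l k)) := by
    intro N
    have : ∑ k ∈ Finset.range N, g k
        = ∑ k ∈ Finset.range N, (F (m k) - F (l k))
          - ∑ k ∈ Finset.range N, c k * (m k - l k) := by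
      rw [← Finset.sum_sub_distrib]
    rw [this]
    linarith [hS N]
  -- partial sums of F∘m - F∘l tend to 0
  have hPlim : Filter.Tendsto (fun N => ∑ k ∈ Finset.range N, (F (m k) - F (l k)))
      Filter.atTop (nhds 0) := by
    have h1 := hsm.hasSum.tendsto_sum_nat
    have h2 := hsl.hasSum.tendsto_sum_nat
    have h3 := h1.sub h2
    rw [heq, sub_self] at h3
    simpa [Finset.sum_sub_distrib] using h3
  -- g is summable: partial sums bounded
  have hgsum : Summable g := by
    apply summable_of_sum_range_le hgnn (c := ∑' k, F (m k))
    intro N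
    refine le_trans (hgP N) ?_
    have h1 : ∑ k ∈ Finset.range N, (F (m k) - F (l k))
        ≤ ∑ k ∈ Finset.range N, F (m k) := by
      apply Finset.sum_le_sum
      intro k _
      have := hFnn (l k) (hl k)
      linarith
    refine le_trans h1 ?_
    exact Summable.sum_le_tsum _ (fun k _ => hFnn _ (hm k)) hsm
  -- tsum g ≤ 0
  have htle : ∑' k, g k ≤ 0 := by
    have h1 := hgsum.hasSum.tendsto_sum_nat
    exact le_of_tendsto_of_tendsto' h1 hPlim hgP
  -- each g k ≤ tsum g ≤ 0, hence g k = 0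
  have hgz : ∀ k, g k = 0 := by
    intro k
    have := Summable.le_tsum hgsum k (fun i _ => hgnn i)
    exact le_antisymm (le_trans this htle) (hgnn k)
  -- conclude
  intro k
  by_contra hne
  have := stmt14_gap_pos (l k) (m k) (hl k) (hm k) hne
  have h0 := hgz k
  simp only [hg, hF, hc] at h0
  linarith
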